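/- Let f : ℝ² → ℝ be nowhere zero and a : ℝ² → ℝ arbitrary. Define on ℝ² × ℝ² (coordinates (q₁,q₂,p₁,p₂)) the matrix Ω(q,p) = (1/f(p)) · [[0,0,−1,0],[0,0,0,−1],[1,0,0,(a(p)/f(p))·J],[0,1,−(a(p)/f(p))·J,0]] with J = (q₁p₂−q₂p₁)/f(p), and let Φ : (0,∞) × ℝ × ℝ → ℝ⁴ be the parametrization Φ(r,ρ,θ) = (r·cosθ, r·sinθ, ρ·cosθ, ρ·sinθ) of the constraint surface J = 0. Then for every (r,ρ,θ) and all u, v ∈ ℝ³ (components ordered (u_r, u_ρ, u_θ)): (DΦ(r,ρ,θ)·u)ᵀ · Ω(Φ(r,ρ,θ)) · (DΦ(r,ρ,θ)·v) = −(1/f(ρ·cosθ, ρ·sinθ)) · (u_r·v_ρ − u_ρ·v_r). That is, the pullback of the deformed symplectic form to the constraint surface equals −(1/f(ρ)) dr ∧ dρ, and hence the reduced symplectic form on M ⫽ SO(2) in the natural coordinates (r,ρ) is ω̃ = −(1/f(ρ)) dr ∧ dρ. -/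

import Mathlib

open Matrix

/-- Deformed angular momentum `J(q,p) = (q₁p₂ − q₂p₁)/f(p)` on the phase space `ℝ⁴` with
coordinates `(q₁,q₂,p₁,p₂)`. -/
noncomputable def J2fun (f : (Fin 2 → ℝ) → ℝ) (x : Fin 4 → ℝ) : ℝ :=
  (x 0 * x 3 - x 1 * x 2) / f ![x 2, x 3]

/-- Matrix of the deformed symplectic form of the two-dimensional rotationally invariant GUP
theory in the coordinates `(q₁,q₂,p₁,p₂)`. -/
noncomputable def Omega2 (f a : (Fin 2 → ℝ) → ℝ) (x : Fin 4 → ℝ) : Matrix (Fin 4) (Fin 4) ℝ :=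
  (f ![x 2, x 3])⁻¹ •
    !![0, 0, -1, 0;
       0, 0, 0, -1;
       1, 0, 0, (a ![x 2, x 3] / f ![x 2, x 3]) * J2fun f x;
       0, 1, -((a ![x 2, x 3] / f ![x 2, x 3]) * J2fun f x), 0]

/-- Parametrization `Φ(r,ρ,θ) = (r·cosθ, r·sinθ, ρ·cosθ, ρ·sinθ)` of the constraint surface
`J = 0`. -/
noncomputable def Phi2 (y : Fin 3 → ℝ) : Fin 4 → ℝ :=
  ![y 0 * Real.cos (y 2), y 0 * Real.sin (y 2),
    y 1 * Real.cos (y 2), y 1 * Real.sin (y 2)]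

noncomputable def DPhi2 (y : Fin 3 → ℝ) : (Fin 3 → ℝ) →L[ℝ] (Fin 4 → ℝ) :=
  ContinuousLinearMap.pi
    ![Real.cos (y 2) • ContinuousLinearMap.proj 0 + (-(y 0 * Real.sin (y 2))) • ContinuousLinearMap.proj 2,
      Real.sin (y 2) • ContinuousLinearMap.proj 0 + (y 0 * Real.cos (y 2)) • ContinuousLinearMap.proj 2,
      Real.cos (y 2) • ContinuousLinearMap.proj 1 + (-(y 1 * Real.sin (y 2))) • ContinuousLinearMap.proj 2,
      Real.sin (y 2) • ContinuousLinearMap.proj 1 + (y 1 * Real.cos (y 2)) • ContinuousLinearMap.proj 2]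

lemma Phi2_hasFDerivAt (y : Fin 3 → ℝ) : HasFDerivAt Phi2 (DPhi2 y) y := by
  rw [hasFDerivAt_pi']
  have hp : ∀ i : Fin 3, HasFDerivAt (fun z : Fin 3 → ℝ => z i)
      (ContinuousLinearMap.proj i : (Fin 3 → ℝ) →L[ℝ] ℝ) y :=
    fun i => hasFDerivAt_apply i y
  have hc : HasFDerivAt (fun z : Fin 3 → ℝ => Real.cos (z 2))
      ((-Real.sin (y 2)) • (ContinuousLinearMap.proj 2 : (Fin 3 → ℝ) →L[ℝ] ℝ)) y :=
    by have h := (Real.hasDerivAt_cos (y 2)).comp_hasFDerivAt y (hp 2); exact h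
  have hs : HasFDerivAt (fun z : Fin 3 → ℝ => Real.sin (z 2))
      ((Real.cos (y 2)) • (ContinuousLinearMap.proj 2 : (Fin 3 → ℝ) →L[ℝ] ℝ)) y :=
    by have h := (Real.hasDerivAt_sin (y 2)).comp_hasFDerivAt y (hp 2); exact h
  intro i
  fin_cases i
  · exact ((hp 0).mul hc).congr_fderiv (by ext u; simp [DPhi2]; ring)
  · exact ((hp 0).mul hs).congr_fderiv (by ext u; simp [DPhi2]; ring)
  · exact ((hp 1).mul hc).congr_fderiv (by ext u; simp [DPhi2]; ring)
  · exact ((hp 1).mul hs).congr_fderiv (by ext u; simp [DPhi2]; ring)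

/-- The pullback of the deformed symplectic form of the two-dimensional rotationally
invariant GUP theory to the constraint surface equals `−(1/f(ρ)) dr ∧ dρ`: for all tangent
vectors `u, v`, `(DΦ·u)ᵀ·Ω(Φ)·(DΦ·v) = −(1/f(ρ))·(u_r·v_ρ − u_ρ·v_r)`. Hence the reduced
symplectic form on `M ⫽ SO(2)` in the natural coordinates `(r,ρ)` is `ω̃ = −(1/f(ρ)) dr∧dρ`. -/
theorem stmt_14 (f a : (Fin 2 → ℝ) → ℝ) (hf0 : ∀ p, f p ≠ 0) :
    ∀ y : Fin 3 → ℝ, 0 < y 0 → ∀ u v : Fin 3 → ℝ,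
      (fderiv ℝ Phi2 y u) ⬝ᵥ (Omega2 f a (Phi2 y)).mulVec (fderiv ℝ Phi2 y v) =
        -(1 / f ![y 1 * Real.cos (y 2), y 1 * Real.sin (y 2)]) * (u 0 * v 1 - u 1 * v 0) := by
  intro y hy u v
  rw [(Phi2_hasFDerivAt y).fderiv]
  have hJ : J2fun f (Phi2 y) = 0 := by
    have : Phi2 y 0 * Phi2 y 3 - Phi2 y 1 * Phi2 y 2 = 0 := by simp [Phi2]; ring
    simp [J2fun, this]
  have hcs := Real.sin_sq_add_cos_sq (y 2)
  simp only [Omega2, hJ, mul_zero, neg_zero]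
  simp [DPhi2, Phi2, dotProduct, mulVec, Fin.sum_univ_four, Matrix.smul_apply,
    Matrix.vecHead, Matrix.vecTail]
  linear_combination (f ![y 1 * Real.cos (y 2), y 1 * Real.sin (y 2)])⁻¹ *
    (u 1 * v 0 - u 0 * v 1) * hcs
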